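/- (RK under multiplicative noise, via perturbation theory.) Let A ∈ ℝ^{m×n}, E ∈ ℝ^{m×m}, F ∈ ℝ^{n×n} with I_m + E and I_n + F invertible, and Ã := (I_m + E) A (I_n + F) with every row ã_i nonzero. Let x_LS satisfy A x_LS = b and x_LS ∈ range(Aᵀ) with b ≠ 0; let σ > 0 satisfy ‖A z‖ ≥ σ‖z‖ for every z ∈ range(Aᵀ), and σ̃ > 0 satisfy ‖Ã z‖ ≥ σ̃‖z‖ for every z ∈ range(Ãᵀ). Let ε ∈ ℝ^m, b̃ := b + ε, and assume the noisy system is consistent with minimum-norm solution x_NLS (Ã x_NLS = b̃, x_NLS ∈ range(Ãᵀ)). Set p_i := ‖ã_i‖²/‖Ã‖_F², K_i(x) := x − ((⟨ã_i, x⟩ − b̃_i)/‖ã_i‖²) ã_i, and let x_0 ∈ range(Ãᵀ). Define e_1 := sqrt(‖F‖² + ‖(I_n+F)^{-1}F‖²) and e_2 := (1 + e_1)(‖ε‖/‖b‖ + (1 + ‖ε‖/‖b‖) sqrt(‖E‖² + ‖(I_m+E)^{-1}E‖²)). Then for every k ≥ 0, Σ_{(i_1,…,i_k) ∈ {1,…,m}^k}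 p_{i_1}⋯p_{i_k} ‖K_{i_k}(⋯K_{i_1}(x_0)⋯) − x_LS‖ ≤ (1 − σ̃²/‖Ã‖_F²)^{k/2} ‖x_0 − x_NLS‖ + e_1 ‖x_LS‖ + e_2 ‖b‖/σ. -/

import Mathlib

open Matrix
open scoped RealInnerProductSpace

/-- The `i`-th row of a matrix, viewed as a vector in Euclidean space. -/
noncomputable def row {m n : ℕ} (M : Matrix (Fin m) (Fin n) ℝ) (i : Fin m) :
    EuclideanSpace ℝ (Fin n) :=
  (WithLp.equiv 2 (Fin n → ℝ)).symm (M i)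

/-- Matrix-vector multiplication as a map between Euclidean spaces. -/
noncomputable def mulVecE {m n : ℕ} (M : Matrix (Fin m) (Fin n) ℝ)
    (x : EuclideanSpace ℝ (Fin n)) : EuclideanSpace ℝ (Fin m) :=
  Matrix.toEuclideanLin M x

/-- The Kaczmarz update of `x` for the system `M y = c`, using row `i`:
`x ↦ x - ((⟨mᵢ, x⟩ - cᵢ)/‖mᵢ‖²) mᵢ`. -/
noncomputable def kaczmarz {m n : ℕ} (M : Matrix (Fin m) (Fin n) ℝ) (c : Fin m → ℝ) (i : Fin m)
    (x : EuclideanSpace ℝ (Fin n)) : EuclideanSpace ℝ (Fin n) :=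
  x - ((⟪_root_.row M i, x⟫ - c i) / ‖_root_.row M i‖ ^ 2) • _root_.row M i

/-- Iterated Kaczmarz updates along the index sequence `is = (i₁, …, i_k)`,
applying row `i₁` first: `K_{i_k}(⋯ K_{i₁}(x₀) ⋯)`. -/
noncomputable def kaczmarzIter {m n k : ℕ} (M : Matrix (Fin m) (Fin n) ℝ) (c : Fin m → ℝ)
    (is : Fin k → Fin m) (x0 : EuclideanSpace ℝ (Fin n)) : EuclideanSpace ℝ (Fin n) :=
  (List.ofFn is).foldl (fun x i => kaczmarz M c i x) x0

/-- The squared Frobenius norm `‖M‖_F² = Σ_{i,j} M_{ij}²`. -/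
noncomputable def frobSq {m n : ℕ} (M : Matrix (Fin m) (Fin n) ℝ) : ℝ :=
  ∑ i, ∑ j, (M i j) ^ 2

/-- The row space `range(Mᵀ)` of a matrix, as a submodule of Euclidean space. -/
noncomputable def rowSpace {m n : ℕ} (M : Matrix (Fin m) (Fin n) ℝ) :
    Submodule ℝ (EuclideanSpace ℝ (Fin n)) :=
  LinearMap.range (Matrix.toEuclideanLin Mᵀ)

/-- The spectral norm (operator 2-norm) of a matrix. -/
noncomputable def specNorm {m n : ℕ} (M : Matrix (Fin m) (Fin n) ℝ) : ℝ :=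
  ‖LinearMap.toContinuousLinearMap (Matrix.toEuclideanLin M)‖

lemma mulVecE_apply {m n : ℕ} (M : Matrix (Fin m) (Fin n) ℝ) (x : EuclideanSpace ℝ (Fin n))
    (i : Fin m) : mulVecE M x i = ∑ j, M i j * x j :=
  rfl

lemma rowE_apply {m n : ℕ} (M : Matrix (Fin m) (Fin n) ℝ) (i : Fin m) (j : Fin n) :
    _root_.row M i j = M i j := rfl

lemma inner_row {m n : ℕ} (M : Matrix (Fin m) (Fin n) ℝ) (x : EuclideanSpace ℝ (Fin n))
    (i : Fin m) : ⟪_root_.row M i, x⟫ = mulVecE M x i := by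
  rw [mulVecE_apply, PiLp.inner_apply]
  exact Finset.sum_congr rfl fun j _ => by rw [rowE_apply]; simp; ring

lemma mulVecE_mul {m n p : ℕ} (M : Matrix (Fin m) (Fin n) ℝ) (N : Matrix (Fin n) (Fin p) ℝ)
    (x : EuclideanSpace ℝ (Fin p)) : mulVecE (M * N) x = mulVecE M (mulVecE N x) := by
  simp only [mulVecE, Matrix.toEuclideanLin_apply]
  simp [Matrix.mulVec_mulVec]

lemma mulVecE_one {n : ℕ} (x : EuclideanSpace ℝ (Fin n)) : mulVecE 1 x = x := by
  simp [mulVecE, Matrix.toEuclideanLin_apply]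

lemma mulVecE_add_left {m n : ℕ} (M N : Matrix (Fin m) (Fin n) ℝ) (x : EuclideanSpace ℝ (Fin n)) :
    mulVecE (M + N) x = mulVecE M x + mulVecE N x := by
  simp [mulVecE, map_add]

lemma mulVecE_sub {m n : ℕ} (M : Matrix (Fin m) (Fin n) ℝ) (x y : EuclideanSpace ℝ (Fin n)) :
    mulVecE M (x - y) = mulVecE M x - mulVecE M y := by
  simp [mulVecE, map_sub]

lemma mulVecE_adjoint {m n : ℕ} (M : Matrix (Fin m) (Fin n) ℝ) (c : EuclideanSpace ℝ (Fin m))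
    (z : EuclideanSpace ℝ (Fin n)) : ⟪mulVecE Mᵀ c, z⟫ = ⟪c, mulVecE M z⟫ := by
  simp only [PiLp.inner_apply, RCLike.inner_apply, starRingEnd_apply, star_trivial,
    mulVecE_apply]
  calc ∑ j : Fin n, z j * ∑ i : Fin m, Mᵀ j i * c i
      = ∑ j : Fin n, (∑ i : Fin m, Mᵀ j i * c i) * z j :=
        Finset.sum_congr rfl fun j _ => mul_comm _ _
    _ = ∑ j : Fin n, ∑ i : Fin m, c i * (M i j * z j) := by
        refine Finset.sum_congr rfl fun j _ => ?_
        rw [Finset.sum_mul]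
        exact Finset.sum_congr rfl fun i _ => by rw [Matrix.transpose_apply]; ring
    _ = ∑ i : Fin m, ∑ j : Fin n, c i * (M i j * z j) := Finset.sum_comm
    _ = ∑ i : Fin m, c i * ∑ j : Fin n, M i j * z j := by
        exact Finset.sum_congr rfl fun i _ => (Finset.mul_sum _ _ _).symm
    _ = ∑ i : Fin m, (∑ j : Fin n, M i j * z j) * c i :=
        Finset.sum_congr rfl fun i _ => mul_comm _ _

lemma norm_mulVecE_le {m n : ℕ} (M : Matrix (Fin m) (Fin n) ℝ) (x : EuclideanSpace ℝ (Fin n)) :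
    ‖mulVecE M x‖ ≤ specNorm M * ‖x‖ :=
  (LinearMap.toContinuousLinearMap (Matrix.toEuclideanLin M)).le_opNorm x

lemma specNorm_nonneg {m n : ℕ} (M : Matrix (Fin m) (Fin n) ℝ) : 0 ≤ specNorm M :=
  norm_nonneg _

lemma mem_rowSpace {m n : ℕ} (M : Matrix (Fin m) (Fin n) ℝ) (c : EuclideanSpace ℝ (Fin m)) :
    mulVecE Mᵀ c ∈ rowSpace M := ⟨c, rfl⟩

lemma row_mem_rowSpace {m n : ℕ} (M : Matrix (Fin m) (Fin n) ℝ) (i : Fin m) :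
    _root_.row M i ∈ rowSpace M := by
  refine ⟨EuclideanSpace.single i 1, ?_⟩
  show mulVecE Mᵀ (EuclideanSpace.single i 1) = _root_.row M i
  ext j
  rw [mulVecE_apply, rowE_apply]
  simp only [Matrix.transpose_apply]
  rw [Finset.sum_eq_single i]
  · simp [EuclideanSpace.single]
  · intro b _ hb; simp [EuclideanSpace.single, Pi.single_eq_of_ne hb, hb]
  · simp

lemma mem_orthogonal_rowSpace_iff {m n : ℕ} (M : Matrix (Fin m) (Fin n) ℝ)
    (z : EuclideanSpace ℝ (Fin n)) : z ∈ (rowSpace M)ᗮ ↔ mulVecE M z = 0 := by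
  constructor
  · intro hz
    have h : ⟪mulVecE Mᵀ (mulVecE M z), z⟫ = 0 :=
      (Submodule.mem_orthogonal (rowSpace M) z).mp hz _ (mem_rowSpace M _)
    rw [mulVecE_adjoint, real_inner_self_eq_norm_sq] at h
    have h2 : ‖mulVecE M z‖ = 0 := by nlinarith [norm_nonneg (mulVecE M z)]
    exact norm_eq_zero.mp h2
  · intro hz y hy
    obtain ⟨c, rfl⟩ := hy
    show ⟪mulVecE Mᵀ c, z⟫ = 0
    rw [mulVecE_adjoint, hz, inner_zero_right]


lemma norm_sq_eq_sum' {m : ℕ} (y : EuclideanSpace ℝ (Fin m)) : ‖y‖ ^ 2 = ∑ i, (y i) ^ 2 := by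
  rw [← real_inner_self_eq_norm_sq, PiLp.inner_apply]
  exact Finset.sum_congr rfl fun i _ => by simp [sq]

lemma norm_row_sq {m n : ℕ} (M : Matrix (Fin m) (Fin n) ℝ) (i : Fin m) :
    ‖_root_.row M i‖ ^ 2 = ∑ j, (M i j) ^ 2 := by
  rw [norm_sq_eq_sum']; rfl

lemma frobSq_eq_sum_rows {m n : ℕ} (M : Matrix (Fin m) (Fin n) ℝ) :
    frobSq M = ∑ i, ‖_root_.row M i‖ ^ 2 := by
  unfold frobSq
  exact Finset.sum_congr rfl fun i _ => (norm_row_sq M i).symm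

lemma norm_mulVecE_sq {m n : ℕ} (M : Matrix (Fin m) (Fin n) ℝ) (z : EuclideanSpace ℝ (Fin n)) :
    ‖mulVecE M z‖ ^ 2 = ∑ i, ⟪_root_.row M i, z⟫ ^ 2 := by
  rw [norm_sq_eq_sum']
  exact Finset.sum_congr rfl fun i _ => by rw [inner_row]

lemma norm_mulVecE_sq_le_frob {m n : ℕ} (M : Matrix (Fin m) (Fin n) ℝ)
    (z : EuclideanSpace ℝ (Fin n)) : ‖mulVecE M z‖ ^ 2 ≤ frobSq M * ‖z‖ ^ 2 := by
  rw [norm_mulVecE_sq, frobSq_eq_sum_rows, Finset.sum_mul]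
  refine Finset.sum_le_sum fun i _ => ?_
  have h := abs_real_inner_le_norm (_root_.row M i) z
  calc ⟪_root_.row M i, z⟫ ^ 2 = |⟪_root_.row M i, z⟫| ^ 2 := (sq_abs _).symm
    _ ≤ (‖_root_.row M i‖ * ‖z‖) ^ 2 := by
        exact pow_le_pow_left₀ (abs_nonneg _) h 2
    _ = ‖_root_.row M i‖ ^ 2 * ‖z‖ ^ 2 := by ring

lemma kaczmarz_err {m n : ℕ} (M : Matrix (Fin m) (Fin n) ℝ) (c : Fin m → ℝ)
    (xs : EuclideanSpace ℝ (Fin n)) (hc : ∀ i, c i = ⟪_root_.row M i, xs⟫) (i : Fin m)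
    (x : EuclideanSpace ℝ (Fin n)) :
    kaczmarz M c i x - xs
      = (x - xs) - (⟪_root_.row M i, x - xs⟫ / ‖_root_.row M i‖ ^ 2) • _root_.row M i := by
  unfold kaczmarz
  rw [hc i, inner_sub_right]
  abel

lemma err_proj_sq {n : ℕ} (a e : EuclideanSpace ℝ (Fin n)) (ha : a ≠ 0) :
    ‖e - (⟪a, e⟫ / ‖a‖ ^ 2) • a‖ ^ 2 = ‖e‖ ^ 2 - ⟪a, e⟫ ^ 2 / ‖a‖ ^ 2 := by
  have hna : ‖a‖ ≠ 0 := norm_ne_zero_iff.mpr ha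
  rw [norm_sub_sq_real, real_inner_smul_right, norm_smul]
  rw [Real.norm_eq_abs, mul_pow, sq_abs, real_inner_comm e a]
  field_simp
  ring

section Step

variable {m n : ℕ} (Atil : Matrix (Fin m) (Fin n) ℝ) (c : Fin m → ℝ)
  (xs : EuclideanSpace ℝ (Fin n)) (hc : ∀ i, c i = ⟪_root_.row Atil i, xs⟫)
  (hrow : ∀ i, _root_.row Atil i ≠ 0) (hm : 0 < m)

include hrow hm in
lemma frobSq_pos : 0 < frobSq Atil := by
  rw [frobSq_eq_sum_rows]
  have h0 : ∀ i ∈ Finset.univ, (0:ℝ) ≤ ‖_root_.row Atil i‖ ^ 2 := fun i _ => sq_nonneg _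
  refine lt_of_lt_of_le ?_ (Finset.single_le_sum h0 (Finset.mem_univ ⟨0, hm⟩))
  exact pow_pos (norm_pos_iff.mpr (hrow ⟨0, hm⟩)) 2

include hc hrow in
lemma kaczmarz_step_sum (x : EuclideanSpace ℝ (Fin n)) (hm : 0 < m) :
    ∑ i, (‖_root_.row Atil i‖ ^ 2 / frobSq Atil) * ‖kaczmarz Atil c i x - xs‖ ^ 2
      = ‖x - xs‖ ^ 2 - ‖mulVecE Atil (x - xs)‖ ^ 2 / frobSq Atil := by
  have hfro : frobSq Atil ≠ 0 := ne_of_gt (frobSq_pos Atil hrow hm)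
  have hterm : ∀ i : Fin m,
      (‖_root_.row Atil i‖ ^ 2 / frobSq Atil) * ‖kaczmarz Atil c i x - xs‖ ^ 2
        = ‖_root_.row Atil i‖ ^ 2 / frobSq Atil * ‖x - xs‖ ^ 2
          - ⟪_root_.row Atil i, x - xs⟫ ^ 2 / frobSq Atil := by
    intro i
    have hna : ‖_root_.row Atil i‖ ≠ 0 := norm_ne_zero_iff.mpr (hrow i)
    rw [kaczmarz_err Atil c xs hc i x, err_proj_sq _ _ (hrow i)]
    field_simp
  rw [Finset.sum_congr rfl fun i _ => hterm i, Finset.sum_sub_distrib]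
  rw [← Finset.sum_div, ← norm_mulVecE_sq, ← Finset.sum_mul, ← Finset.sum_div,
    ← frobSq_eq_sum_rows, div_self hfro, one_mul]

end Step


lemma kaczmarzIter_succ {m n k : ℕ} (M : Matrix (Fin m) (Fin n) ℝ) (c : Fin m → ℝ)
    (is : Fin (k + 1) → Fin m) (x0 : EuclideanSpace ℝ (Fin n)) :
    kaczmarzIter M c is x0
      = kaczmarzIter M c (fun j => is j.succ) (kaczmarz M c (is 0) x0) := by
  unfold kaczmarzIter
  rw [List.ofFn_succ]
  rfl

lemma kaczmarzIter_zero {m n : ℕ} (M : Matrix (Fin m) (Fin n) ℝ) (c : Fin m → ℝ)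
    (is : Fin 0 → Fin m) (x0 : EuclideanSpace ℝ (Fin n)) :
    kaczmarzIter M c is x0 = x0 := by
  unfold kaczmarzIter
  simp

section Iter

variable {m n : ℕ} (Atil : Matrix (Fin m) (Fin n) ℝ) (c : Fin m → ℝ)
  (xs : EuclideanSpace ℝ (Fin n)) (hc : ∀ i, c i = ⟪_root_.row Atil i, xs⟫)
  (hrow : ∀ i, _root_.row Atil i ≠ 0) (hm : 0 < m)
  (σt : ℝ) (hσt : 0 < σt)
  (hσtA : ∀ z ∈ rowSpace Atil, σt * ‖z‖ ≤ ‖mulVecE Atil z‖)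

include hrow hm hσt hσtA in
lemma rate_nonneg : 0 ≤ 1 - σt ^ 2 / frobSq Atil := by
  have hfro := frobSq_pos Atil hrow hm
  have hz : _root_.row Atil ⟨0, hm⟩ ∈ rowSpace Atil := row_mem_rowSpace _ _
  have h1 := hσtA _ hz
  have h2 := norm_mulVecE_sq_le_frob Atil (_root_.row Atil ⟨0, hm⟩)
  have hzpos : 0 < ‖_root_.row Atil ⟨0, hm⟩‖ := norm_pos_iff.mpr (hrow _)
  have h3 : (σt * ‖_root_.row Atil ⟨0, hm⟩‖) ^ 2 ≤ ‖mulVecE Atil (_root_.row Atil ⟨0, hm⟩)‖ ^ 2 :=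
    pow_le_pow_left₀ (by positivity) h1 2
  have h5 : σt ^ 2 * ‖_root_.row Atil ⟨0, hm⟩‖ ^ 2
      ≤ frobSq Atil * ‖_root_.row Atil ⟨0, hm⟩‖ ^ 2 := by nlinarith [h3.trans h2]
  have h4 : σt ^ 2 ≤ frobSq Atil :=
    le_of_mul_le_mul_right h5 (pow_pos hzpos 2)
  have : σt ^ 2 / frobSq Atil ≤ 1 := (div_le_one hfro).mpr h4
  linarith

include hc hrow hm hσt hσtA in
lemma kaczmarz_step_bound (x : EuclideanSpace ℝ (Fin n)) (hx : x - xs ∈ rowSpace Atil) :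
    ∑ i, (‖_root_.row Atil i‖ ^ 2 / frobSq Atil) * ‖kaczmarz Atil c i x - xs‖ ^ 2
      ≤ (1 - σt ^ 2 / frobSq Atil) * ‖x - xs‖ ^ 2 := by
  have hfro := frobSq_pos Atil hrow hm
  rw [kaczmarz_step_sum Atil c xs hc hrow x hm]
  have h1 := hσtA _ hx
  have h3 : (σt * ‖x - xs‖) ^ 2 ≤ ‖mulVecE Atil (x - xs)‖ ^ 2 :=
    pow_le_pow_left₀ (by positivity) h1 2
  have h4 : σt ^ 2 * ‖x - xs‖ ^ 2 ≤ ‖mulVecE Atil (x - xs)‖ ^ 2 := by nlinarith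
  have h5 : σt ^ 2 * ‖x - xs‖ ^ 2 / frobSq Atil ≤ ‖mulVecE Atil (x - xs)‖ ^ 2 / frobSq Atil := by
    gcongr
  have h6 : (1 - σt ^ 2 / frobSq Atil) * ‖x - xs‖ ^ 2
      = ‖x - xs‖ ^ 2 - σt ^ 2 * ‖x - xs‖ ^ 2 / frobSq Atil := by ring
  linarith

include hc hrow in
lemma kaczmarz_mem (x : EuclideanSpace ℝ (Fin n)) (hx : x - xs ∈ rowSpace Atil) (i : Fin m) :
    kaczmarz Atil c i x - xs ∈ rowSpace Atil := by
  rw [kaczmarz_err Atil c xs hc i x]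
  exact Submodule.sub_mem _ hx (Submodule.smul_mem _ _ (row_mem_rowSpace _ i))

include hc hrow hm hσt hσtA in
lemma kaczmarz_iter_sq_bound :
    ∀ (k : ℕ) (x : EuclideanSpace ℝ (Fin n)), x - xs ∈ rowSpace Atil →
    ∑ is : Fin k → Fin m,
        (∏ j, ‖_root_.row Atil (is j)‖ ^ 2 / frobSq Atil) * ‖kaczmarzIter Atil c is x - xs‖ ^ 2
      ≤ (1 - σt ^ 2 / frobSq Atil) ^ k * ‖x - xs‖ ^ 2 := by
  intro k
  induction k with
  | zero =>
    intro x _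
    simp only [kaczmarzIter_zero]
    rw [Finset.sum_congr rfl (fun is _ => by
      rw [show (∏ j : Fin 0, ‖_root_.row Atil (is j)‖ ^ 2 / frobSq Atil) = 1 from
        Finset.prod_of_isEmpty _]), Finset.sum_const]
    simp
  | succ k ih =>
    intro x hx
    have hfro := frobSq_pos Atil hrow hm
    have hrate := rate_nonneg Atil hrow hm σt hσt hσtA
    set δ := 1 - σt ^ 2 / frobSq Atil with hδ
    have hsum : ∑ is : Fin (k+1) → Fin m,
          (∏ j, ‖_root_.row Atil (is j)‖ ^ 2 / frobSq Atil)
            * ‖kaczmarzIter Atil c is x - xs‖ ^ 2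
        = ∑ i : Fin m, ∑ is : Fin k → Fin m,
          ((‖_root_.row Atil i‖ ^ 2 / frobSq Atil)
            * ((∏ j, ‖_root_.row Atil (is j)‖ ^ 2 / frobSq Atil)
              * ‖kaczmarzIter Atil c is (kaczmarz Atil c i x) - xs‖ ^ 2)) := by
      rw [← Fintype.sum_equiv (Fin.consEquiv (fun _ : Fin (k+1) => Fin m))
        (fun q => (∏ j, ‖_root_.row Atil ((Fin.cons q.1 q.2 : Fin (k+1) → Fin m) j)‖ ^ 2
            / frobSq Atil)
          * ‖kaczmarzIter Atil c (Fin.cons q.1 q.2) x - xs‖ ^ 2)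
        (fun is => (∏ j, ‖_root_.row Atil (is j)‖ ^ 2 / frobSq Atil)
          * ‖kaczmarzIter Atil c is x - xs‖ ^ 2)
        (fun q => rfl)]
      rw [Fintype.sum_prod_type]
      refine Finset.sum_congr rfl fun i _ => Finset.sum_congr rfl fun is _ => ?_
      rw [kaczmarzIter_succ, Fin.prod_univ_succ]
      simp only [Fin.cons_zero, Fin.cons_succ]
      ring
    rw [hsum]
    have hstep : ∀ i : Fin m,
        ∑ is : Fin k → Fin m,
          ((‖_root_.row Atil i‖ ^ 2 / frobSq Atil)
            * ((∏ j, ‖_root_.row Atil (is j)‖ ^ 2 / frobSq Atil)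
              * ‖kaczmarzIter Atil c is (kaczmarz Atil c i x) - xs‖ ^ 2))
        ≤ (‖_root_.row Atil i‖ ^ 2 / frobSq Atil)
            * (δ ^ k * ‖kaczmarz Atil c i x - xs‖ ^ 2) := by
      intro i
      rw [← Finset.mul_sum]
      refine mul_le_mul_of_nonneg_left ?_ (by positivity)
      exact ih (kaczmarz Atil c i x) (kaczmarz_mem Atil c xs hc hrow x hx i)
    calc ∑ i : Fin m, ∑ is : Fin k → Fin m,
          ((‖_root_.row Atil i‖ ^ 2 / frobSq Atil)
            * ((∏ j, ‖_root_.row Atil (is j)‖ ^ 2 / frobSq Atil)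
              * ‖kaczmarzIter Atil c is (kaczmarz Atil c i x) - xs‖ ^ 2))
        ≤ ∑ i : Fin m, (‖_root_.row Atil i‖ ^ 2 / frobSq Atil)
            * (δ ^ k * ‖kaczmarz Atil c i x - xs‖ ^ 2) :=
          Finset.sum_le_sum fun i _ => hstep i
      _ = δ ^ k * ∑ i : Fin m, (‖_root_.row Atil i‖ ^ 2 / frobSq Atil)
            * ‖kaczmarz Atil c i x - xs‖ ^ 2 := by
          rw [Finset.mul_sum]; exact Finset.sum_congr rfl fun i _ => by ring
      _ ≤ δ ^ k * (δ * ‖x - xs‖ ^ 2) := by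
          refine mul_le_mul_of_nonneg_left ?_ (by positivity)
          exact kaczmarz_step_bound Atil c xs hc hrow hm σt hσt hσtA x hx
      _ = δ ^ (k + 1) * ‖x - xs‖ ^ 2 := by ring

end Iter


section Agg

variable {m n : ℕ} (Atil : Matrix (Fin m) (Fin n) ℝ)
  (hrow : ∀ i, _root_.row Atil i ≠ 0) (hm : 0 < m)

include hrow hm in
lemma sum_probs_one : ∑ i, ‖_root_.row Atil i‖ ^ 2 / frobSq Atil = 1 := by
  rw [← Finset.sum_div, ← frobSq_eq_sum_rows, div_self (ne_of_gt (frobSq_pos Atil hrow hm))]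

include hrow hm in
lemma sum_prod_probs_one (k : ℕ) :
    ∑ is : Fin k → Fin m, ∏ j, ‖_root_.row Atil (is j)‖ ^ 2 / frobSq Atil = 1 := by
  have h := Finset.prod_univ_sum (fun _ : Fin k => (Finset.univ : Finset (Fin m)))
    (fun _ j => ‖_root_.row Atil j‖ ^ 2 / frobSq Atil)
  rw [Fintype.piFinset_univ] at h
  rw [← h]
  rw [Finset.prod_congr rfl fun j _ => sum_probs_one Atil hrow hm]
  exact Finset.prod_const_one

end Agg

lemma expect_le_sqrt {I : Type*} [Fintype I] (w v : I → ℝ) (hw : ∀ i, 0 ≤ w i)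
    (hsum : ∑ i, w i = 1) (hv : ∀ i, 0 ≤ v i) :
    ∑ i, w i * v i ≤ Real.sqrt (∑ i, w i * v i ^ 2) := by
  have h := Finset.sum_mul_sq_le_sq_mul_sq Finset.univ
    (fun i => Real.sqrt (w i)) (fun i => Real.sqrt (w i) * v i)
  have h1 : ∀ i : I, Real.sqrt (w i) * (Real.sqrt (w i) * v i) = w i * v i := by
    intro i
    rw [← mul_assoc, Real.mul_self_sqrt (hw i)]
  have h2 : ∀ i : I, Real.sqrt (w i) ^ 2 = w i := fun i => Real.sq_sqrt (hw i)
  have h3 : ∀ i : I, (Real.sqrt (w i) * v i) ^ 2 = w i * v i ^ 2 := by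
    intro i
    rw [mul_pow, h2 i]
  rw [Finset.sum_congr rfl fun i _ => h1 i, Finset.sum_congr rfl fun i _ => h2 i,
    Finset.sum_congr rfl fun i _ => h3 i, hsum, one_mul] at h
  have hnn : 0 ≤ ∑ i, w i * v i :=
    Finset.sum_nonneg fun i _ => mul_nonneg (hw i) (hv i)
  calc ∑ i, w i * v i = Real.sqrt ((∑ i, w i * v i) ^ 2) := (Real.sqrt_sq hnn).symm
    _ ≤ Real.sqrt (∑ i, w i * v i ^ 2) := Real.sqrt_le_sqrt h

section Part1

variable {m n : ℕ} (Atil : Matrix (Fin m) (Fin n) ℝ) (c : Fin m → ℝ)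
  (xs : EuclideanSpace ℝ (Fin n)) (hc : ∀ i, c i = ⟪_root_.row Atil i, xs⟫)
  (hrow : ∀ i, _root_.row Atil i ≠ 0) (hm : 0 < m)
  (σt : ℝ) (hσt : 0 < σt)
  (hσtA : ∀ z ∈ rowSpace Atil, σt * ‖z‖ ≤ ‖mulVecE Atil z‖)

include hc hrow hm hσt hσtA in
lemma part1_bound (k : ℕ) (x0 : EuclideanSpace ℝ (Fin n)) (hx0 : x0 - xs ∈ rowSpace Atil) :
    ∑ is : Fin k → Fin m,
        (∏ j, ‖_root_.row Atil (is j)‖ ^ 2 / frobSq Atil) * ‖kaczmarzIter Atil c is x0 - xs‖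
      ≤ Real.sqrt ((1 - σt ^ 2 / frobSq Atil) ^ k) * ‖x0 - xs‖ := by
  have hfro := frobSq_pos Atil hrow hm
  have hw : ∀ is : Fin k → Fin m, 0 ≤ ∏ j, ‖_root_.row Atil (is j)‖ ^ 2 / frobSq Atil :=
    fun is => Finset.prod_nonneg fun j _ => by positivity
  have hCS := expect_le_sqrt (fun is : Fin k → Fin m => ∏ j, ‖_root_.row Atil (is j)‖ ^ 2 / frobSq Atil)
    (fun is => ‖kaczmarzIter Atil c is x0 - xs‖) hw (sum_prod_probs_one Atil hrow hm k)
    (fun is => norm_nonneg _)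
  refine le_trans hCS ?_
  have hS2 := kaczmarz_iter_sq_bound Atil c xs hc hrow hm σt hσt hσtA k x0 hx0
  calc Real.sqrt (∑ is : Fin k → Fin m,
          (∏ j, ‖_root_.row Atil (is j)‖ ^ 2 / frobSq Atil) * ‖kaczmarzIter Atil c is x0 - xs‖ ^ 2)
      ≤ Real.sqrt ((1 - σt ^ 2 / frobSq Atil) ^ k * ‖x0 - xs‖ ^ 2) := Real.sqrt_le_sqrt hS2
    _ = Real.sqrt ((1 - σt ^ 2 / frobSq Atil) ^ k) * ‖x0 - xs‖ := by
        rw [Real.sqrt_mul (pow_nonneg (rate_nonneg Atil hrow hm σt hσt hσtA) k),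
          Real.sqrt_sq (norm_nonneg _)]

end Part1


lemma mulVecE_sub_left {m n : ℕ} (M N : Matrix (Fin m) (Fin n) ℝ) (x : EuclideanSpace ℝ (Fin n)) :
    mulVecE (M - N) x = mulVecE M x - mulVecE N x := by
  ext i
  have h : (mulVecE M x - mulVecE N x) i = mulVecE M x i - mulVecE N x i := rfl
  rw [h]
  simp [mulVecE_apply, Matrix.sub_apply, sub_mul, Finset.sum_sub_distrib]

lemma mulVecE_add {m n : ℕ} (M : Matrix (Fin m) (Fin n) ℝ) (x y : EuclideanSpace ℝ (Fin n)) :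
    mulVecE M (x + y) = mulVecE M x + mulVecE M y := by
  simp [mulVecE, map_add]

lemma mulVecE_zero {m n : ℕ} (M : Matrix (Fin m) (Fin n) ℝ) : mulVecE M 0 = 0 := by
  simp [mulVecE, map_zero]

lemma le_sqrt_add_sq {a c : ℝ} (hc : 0 ≤ c) : c ≤ Real.sqrt (a ^ 2 + c ^ 2) := by
  have h := Real.sqrt_le_sqrt (le_add_of_nonneg_left (sq_nonneg a) : c ^ 2 ≤ a ^ 2 + c ^ 2)
  rwa [Real.sqrt_sq hc] at h

lemma norm_orthProj_le {n : ℕ} (K : Submodule ℝ (EuclideanSpace ℝ (Fin n)))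
    (y : EuclideanSpace ℝ (Fin n)) :
    ‖((Submodule.orthogonalProjectionOnto K y : K) : EuclideanSpace ℝ (Fin n))‖ ≤ ‖y‖ := by
  have h := ContinuousLinearMap.le_of_opNorm_le (Submodule.orthogonalProjectionOnto K)
    (Submodule.orthogonalProjectionOnto_norm_le K) y
  rw [one_mul] at h
  simpa using h

set_option maxHeartbeats 2000000 in
lemma part2_bound {m n : ℕ}
    (A : Matrix (Fin m) (Fin n) ℝ)
    (E : Matrix (Fin m) (Fin m) ℝ) (F : Matrix (Fin n) (Fin n) ℝ)
    (hE : IsUnit (1 + E)) (hF : IsUnit (1 + F))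
    (Atil : Matrix (Fin m) (Fin n) ℝ)
    (hAtil : Atil = (1 + E) * A * (1 + F))
    (xLS : EuclideanSpace ℝ (Fin n)) (hxLS : xLS ∈ rowSpace A)
    (σ : ℝ) (hσ : 0 < σ)
    (hσA : ∀ z ∈ rowSpace A, σ * ‖z‖ ≤ ‖mulVecE A z‖)
    (ε : EuclideanSpace ℝ (Fin m))
    (xNLS : EuclideanSpace ℝ (Fin n))
    (hNLS : mulVecE Atil xNLS = mulVecE A xLS + ε)
    (hxNLS : xNLS ∈ rowSpace Atil) :
    ‖xNLS - xLS‖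
      ≤ Real.sqrt (specNorm F ^ 2 + specNorm ((1 + F)⁻¹ * F) ^ 2) * ‖xLS‖
        + (1 + Real.sqrt (specNorm F ^ 2 + specNorm ((1 + F)⁻¹ * F) ^ 2))
          * ((‖ε‖ + Real.sqrt (specNorm E ^ 2 + specNorm ((1 + E)⁻¹ * E) ^ 2)
              * (‖mulVecE A xLS‖ + ‖ε‖)) / σ) := by
  classical
  set b := mulVecE A xLS with hbdef
  have hEd := (Matrix.isUnit_iff_isUnit_det _).mp hE
  have hFd := (Matrix.isUnit_iff_isUnit_det _).mp hF
  set GE := (1 + E)⁻¹ * E with hGE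
  set GF := (1 + F)⁻¹ * F with hGF
  set sE := Real.sqrt (specNorm E ^ 2 + specNorm GE ^ 2) with hsE
  set sF := Real.sqrt (specNorm F ^ 2 + specNorm GF ^ 2) with hsF
  have hsE_GE : specNorm GE ≤ sE := le_sqrt_add_sq (specNorm_nonneg _)
  have hsF0 : 0 ≤ sF := Real.sqrt_nonneg _
  -- inverse identities
  have hinvE : (1 + E)⁻¹ = 1 - GE := by
    have h := Matrix.nonsing_inv_mul (1 + E) hEd
    rw [mul_add, mul_one] at h
    exact eq_sub_of_add_eq h
  have hinvF : (1 + F)⁻¹ = 1 - GF := by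
    have h := Matrix.nonsing_inv_mul (1 + F) hFd
    rw [mul_add, mul_one] at h
    exact eq_sub_of_add_eq h
  -- the residual r
  have hEb : mulVecE (1 + E) (mulVecE (A * (1 + F)) xNLS) = b + ε := by
    rw [← mulVecE_mul, ← Matrix.mul_assoc, ← hAtil, hNLS]
  set r := ε - mulVecE GE (b + ε) with hrdef
  have hrval : mulVecE (A * (1 + F)) xNLS = b + r := by
    have h := congrArg (mulVecE (1 + E)⁻¹) hEb
    rw [← mulVecE_mul, Matrix.nonsing_inv_mul _ hEd, mulVecE_one] at h
    rw [h, hinvE, mulVecE_sub_left, mulVecE_one, hrdef]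
    abel
  set ρ := ‖ε‖ + sE * (‖b‖ + ‖ε‖) with hρdef
  have hρ0 : 0 ≤ ρ := by
    have : 0 ≤ sE * (‖b‖ + ‖ε‖) :=
      mul_nonneg (Real.sqrt_nonneg _) (add_nonneg (norm_nonneg _) (norm_nonneg _))
    positivity
  have hrρ : ‖r‖ ≤ ρ := by
    calc ‖r‖ ≤ ‖ε‖ + ‖mulVecE GE (b + ε)‖ := norm_sub_le _ _
      _ ≤ ‖ε‖ + specNorm GE * ‖b + ε‖ := by linarith [norm_mulVecE_le GE (b + ε)]
      _ ≤ ‖ε‖ + sE * (‖b‖ + ‖ε‖) := by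
          have h1 : specNorm GE * ‖b + ε‖ ≤ sE * (‖b‖ + ‖ε‖) :=
            mul_le_mul hsE_GE (norm_add_le _ _) (norm_nonneg _) (le_trans (specNorm_nonneg _) hsE_GE)
          linarith
  -- w and its projection onto rowSpace A
  set w := mulVecE (1 + F) xNLS - xLS with hwdef
  have hAw : mulVecE A w = r := by
    rw [hwdef, mulVecE_sub, ← mulVecE_mul, hrval, ← hbdef]
    abel
  set Pw := ((Submodule.orthogonalProjectionOnto (rowSpace A) w : rowSpace A) : EuclideanSpace ℝ (Fin n))
    with hPwdef
  have hPw_mem : Pw ∈ rowSpace A := SetLike.coe_mem _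
  have hA_Pw : mulVecE A Pw = r := by
    have horth := Submodule.sub_starProjection_mem_orthogonal (K := rowSpace A) w
    have h0 : mulVecE A (w - Pw) = 0 := (mem_orthogonal_rowSpace_iff A _).mp horth
    rw [mulVecE_sub] at h0
    have h1 : mulVecE A Pw = mulVecE A w := by
      have := sub_eq_zero.mp h0
      exact this.symm
    rw [h1, hAw]
  have hPw_norm : ‖Pw‖ ≤ ρ / σ := by
    have h1 := hσA Pw hPw_mem
    rw [hA_Pw] at h1
    rw [le_div_iff₀ hσ]
    calc ‖Pw‖ * σ = σ * ‖Pw‖ := mul_comm _ _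
      _ ≤ ‖r‖ := h1
      _ ≤ ρ := hrρ
  set u := xLS + Pw with hudef
  have hu_mem : u ∈ rowSpace A := Submodule.add_mem _ hxLS hPw_mem
  have hAu : mulVecE A u = b + r := by rw [hudef, mulVecE_add, hA_Pw, ← hbdef]
  have hu_norm : ‖u‖ ≤ ‖xLS‖ + ρ / σ := by
    calc ‖u‖ ≤ ‖xLS‖ + ‖Pw‖ := norm_add_le _ _
      _ ≤ ‖xLS‖ + ρ / σ := by linarith
  -- Tu and orthogonality of g
  set Tu := mulVecE (1 + F)⁻¹ u with hTudef
  set g := Tu - xNLS with hgdef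
  have hAFg : mulVecE (A * (1 + F)) g = 0 := by
    rw [hgdef, mulVecE_sub, hrval]
    have h1 : mulVecE (A * (1 + F)) Tu = mulVecE A u := by
      rw [hTudef, ← mulVecE_mul, Matrix.mul_assoc, Matrix.mul_nonsing_inv _ hFd, Matrix.mul_one]
    rw [h1, hAu, sub_self]
  have hg_orth : g ∈ (rowSpace Atil)ᗮ := by
    rw [mem_orthogonal_rowSpace_iff]
    rw [hAtil, Matrix.mul_assoc, mulVecE_mul, hAFg, mulVecE_zero]
  set Pt := Submodule.orthogonalProjectionOnto (rowSpace Atil) with hPtdef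
  set d := xNLS - u with hddef
  have hPt_xNLS : ((Pt xNLS : rowSpace Atil) : EuclideanSpace ℝ (Fin n)) = xNLS :=
    Submodule.starProjection_eq_self_iff.mpr hxNLS
  have hPt_g : Pt g = 0 := Submodule.orthogonalProjectionOnto_apply_of_mem_orthogonal hg_orth
  have hPt_Tu : ((Pt Tu : rowSpace Atil) : EuclideanSpace ℝ (Fin n)) = xNLS := by
    have h1 : Tu = xNLS + g := by rw [hgdef]; abel
    rw [h1, map_add, hPt_g, add_zero, hPt_xNLS]
  have hTu_eq : Tu = u - mulVecE GF u := by
    rw [hTudef, hinvF, mulVecE_sub_left, mulVecE_one]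
  have hPtd_eq1 : ((Pt d : rowSpace Atil) : EuclideanSpace ℝ (Fin n))
      = xNLS - ((Pt u : rowSpace Atil) : EuclideanSpace ℝ (Fin n)) := by
    rw [hddef, map_sub]
    push_cast
    rw [hPt_xNLS]
  have hPtd_norm : ‖((Pt d : rowSpace Atil) : EuclideanSpace ℝ (Fin n))‖ ≤ specNorm GF * ‖u‖ := by
    have h1 := hPtd_eq1
    have h2 : ((Pt d : rowSpace Atil) : EuclideanSpace ℝ (Fin n))
        = -((Pt (mulVecE GF u) : rowSpace Atil) : EuclideanSpace ℝ (Fin n)) := by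
      rw [h1, ← hPt_Tu, ← Submodule.coe_sub, ← map_sub]
      have h3 : Tu - u = -(mulVecE GF u) := by rw [hTu_eq]; abel
      rw [h3, map_neg, Submodule.coe_neg]
    rw [h2, norm_neg]
    calc ‖((Pt (mulVecE GF u) : rowSpace Atil) : EuclideanSpace ℝ (Fin n))‖
        ≤ ‖mulVecE GF u‖ := norm_orthProj_le _ _
      _ ≤ specNorm GF * ‖u‖ := norm_mulVecE_le _ _
  set k1 := u - ((Pt u : rowSpace Atil) : EuclideanSpace ℝ (Fin n)) with hk1def
  have hk1_orth : k1 ∈ (rowSpace Atil)ᗮ := Submodule.sub_starProjection_mem_orthogonal u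
  have hAtil_k1 : mulVecE Atil k1 = 0 := (mem_orthogonal_rowSpace_iff Atil k1).mp hk1_orth
  have hAF_k1 : mulVecE (A * (1 + F)) k1 = 0 := by
    rw [hAtil, Matrix.mul_assoc, mulVecE_mul] at hAtil_k1
    have h := congrArg (mulVecE (1 + E)⁻¹) hAtil_k1
    rw [← mulVecE_mul, Matrix.nonsing_inv_mul _ hEd, mulVecE_one, mulVecE_zero] at h
    exact h
  have hFk1_orth : mulVecE (1 + F) k1 ∈ (rowSpace A)ᗮ := by
    rw [mem_orthogonal_rowSpace_iff, ← mulVecE_mul]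
    exact hAF_k1
  have hinner0 : ⟪u, mulVecE (1 + F) k1⟫ = 0 :=
    (Submodule.mem_orthogonal _ _).mp hFk1_orth u hu_mem
  have hinner : ⟪u, k1⟫ = -⟪u, mulVecE F k1⟫ := by
    rw [mulVecE_add_left, mulVecE_one, inner_add_right] at hinner0
    linarith
  have hPtu_k1 : ⟪((Pt u : rowSpace Atil) : EuclideanSpace ℝ (Fin n)), k1⟫ = 0 :=
    (Submodule.mem_orthogonal _ _).mp hk1_orth _ (SetLike.coe_mem _)
  have hk1_sq : ‖k1‖ ^ 2 = -⟪u, mulVecE F k1⟫ := by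
    rw [← real_inner_self_eq_norm_sq]
    nth_rewrite 1 [hk1def]
    rw [inner_sub_left, hPtu_k1, sub_zero, hinner]
  have hk1_norm : ‖k1‖ ≤ specNorm F * ‖u‖ := by
    rcases eq_or_lt_of_le (norm_nonneg k1) with h0 | hpos
    · rw [← h0]
      have := specNorm_nonneg F
      positivity
    · have h1 : ‖k1‖ ^ 2 ≤ ‖u‖ * (specNorm F * ‖k1‖) := by
        rw [hk1_sq]
        calc -⟪u, mulVecE F k1⟫ = ⟪u, -mulVecE F k1⟫ := by rw [inner_neg_right]
          _ ≤ ‖u‖ * ‖-mulVecE F k1‖ := real_inner_le_norm _ _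
          _ = ‖u‖ * ‖mulVecE F k1‖ := by rw [norm_neg]
          _ ≤ ‖u‖ * (specNorm F * ‖k1‖) :=
              mul_le_mul_of_nonneg_left (norm_mulVecE_le F k1) (norm_nonneg u)
      nlinarith [hpos]
  have hd_eq : d = ((Pt d : rowSpace Atil) : EuclideanSpace ℝ (Fin n)) - k1 := by
    rw [hPtd_eq1, hk1def, hddef]
    abel
  have hPtd_k1 : ⟪((Pt d : rowSpace Atil) : EuclideanSpace ℝ (Fin n)), k1⟫ = 0 :=
    (Submodule.mem_orthogonal _ _).mp hk1_orth _ (SetLike.coe_mem _)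
  have hd_sq : ‖d‖ ^ 2 = ‖((Pt d : rowSpace Atil) : EuclideanSpace ℝ (Fin n))‖ ^ 2 + ‖k1‖ ^ 2 := by
    calc ‖d‖ ^ 2 = ‖((Pt d : rowSpace Atil) : EuclideanSpace ℝ (Fin n)) - k1‖ ^ 2 := by
          rw [← hd_eq]
      _ = _ := by rw [norm_sub_sq_real, hPtd_k1]; ring
  have hsum_nonneg : 0 ≤ specNorm F ^ 2 + specNorm GF ^ 2 := by positivity
  have hd_norm : ‖d‖ ≤ sF * ‖u‖ := by
    have h2 : ‖d‖ ^ 2 ≤ (specNorm F ^ 2 + specNorm GF ^ 2) * ‖u‖ ^ 2 := by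
      nlinarith [hPtd_norm, hk1_norm, norm_nonneg k1,
        norm_nonneg ((Pt d : rowSpace Atil) : EuclideanSpace ℝ (Fin n)),
        specNorm_nonneg GF, specNorm_nonneg F, norm_nonneg u]
    calc ‖d‖ = Real.sqrt (‖d‖ ^ 2) := (Real.sqrt_sq (norm_nonneg _)).symm
      _ ≤ Real.sqrt ((specNorm F ^ 2 + specNorm GF ^ 2) * ‖u‖ ^ 2) := Real.sqrt_le_sqrt h2
      _ = sF * ‖u‖ := by rw [Real.sqrt_mul hsum_nonneg, Real.sqrt_sq (norm_nonneg _), hsF]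
  have hfinal : xNLS - xLS = d + Pw := by
    rw [hddef, hudef]
    abel
  have hstep : ‖xNLS - xLS‖ ≤ sF * ‖xLS‖ + (1 + sF) * (ρ / σ) := by
    have hmul : sF * ‖u‖ ≤ sF * (‖xLS‖ + ρ / σ) := mul_le_mul_of_nonneg_left hu_norm hsF0
    calc ‖xNLS - xLS‖ = ‖d + Pw‖ := by rw [hfinal]
      _ ≤ ‖d‖ + ‖Pw‖ := norm_add_le _ _
      _ ≤ sF * (‖xLS‖ + ρ / σ) + ρ / σ := by linarith [hd_norm]
      _ = sF * ‖xLS‖ + (1 + sF) * (ρ / σ) := by ring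
  exact hstep


set_option maxHeartbeats 2000000 in
/-- Randomized Kaczmarz under multiplicative noise, via perturbation theory:
`Ã = (I + E) A (I + F)` with `I + E`, `I + F` invertible, `b = A x_LS ≠ 0`,
`b̃ = b + ε`, and the noisy system `Ã x = b̃` consistent with minimum-norm
solution `x_NLS`. With
`e₁ = √(‖F‖² + ‖(I+F)⁻¹F‖²)` and
`e₂ = (1 + e₁)(‖ε‖/‖b‖ + (1 + ‖ε‖/‖b‖)√(‖E‖² + ‖(I+E)⁻¹E‖²))`,
the expectation `E‖x_k - x_LS‖` (the left-hand side) is bounded by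
`(1 - σ̃²/‖Ã‖_F²)^{k/2} ‖x₀ - x_NLS‖ + e₁‖x_LS‖ + e₂‖b‖/σ`. -/
theorem rk_multiplicative_perturbation {m n : ℕ}
    (A : Matrix (Fin m) (Fin n) ℝ)
    (E : Matrix (Fin m) (Fin m) ℝ) (F : Matrix (Fin n) (Fin n) ℝ)
    (hE : IsUnit (1 + E)) (hF : IsUnit (1 + F))
    (Atil : Matrix (Fin m) (Fin n) ℝ)
    (hAtil : Atil = (1 + E) * A * (1 + F))
    (hrow : ∀ i, _root_.row Atil i ≠ 0)
    (xLS : EuclideanSpace ℝ (Fin n)) (hxLS : xLS ∈ rowSpace A)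
    (hb : mulVecE A xLS ≠ 0)
    (σ : ℝ) (hσ : 0 < σ)
    (hσA : ∀ z ∈ rowSpace A, σ * ‖z‖ ≤ ‖mulVecE A z‖)
    (σt : ℝ) (hσt : 0 < σt)
    (hσtA : ∀ z ∈ rowSpace Atil, σt * ‖z‖ ≤ ‖mulVecE Atil z‖)
    (ε : EuclideanSpace ℝ (Fin m))
    (xNLS : EuclideanSpace ℝ (Fin n))
    (hNLS : mulVecE Atil xNLS = mulVecE A xLS + ε)
    (hxNLS : xNLS ∈ rowSpace Atil)
    (x0 : EuclideanSpace ℝ (Fin n)) (hx0 : x0 ∈ rowSpace Atil)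
    (e₁ e₂ : ℝ)
    (he₁ : e₁ = Real.sqrt (specNorm F ^ 2 + specNorm ((1 + F)⁻¹ * F) ^ 2))
    (he₂ : e₂ = (1 + e₁) * (‖ε‖ / ‖mulVecE A xLS‖
        + (1 + ‖ε‖ / ‖mulVecE A xLS‖) *
            Real.sqrt (specNorm E ^ 2 + specNorm ((1 + E)⁻¹ * E) ^ 2)))
    (k : ℕ) :
    ∑ is : Fin k → Fin m,
        (∏ j, ‖_root_.row Atil (is j)‖ ^ 2 / frobSq Atil) *
          ‖kaczmarzIter Atil (fun j => mulVecE A xLS j + ε j) is x0 - xLS‖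
      ≤ Real.sqrt ((1 - σt ^ 2 / frobSq Atil) ^ k) * ‖x0 - xNLS‖
        + e₁ * ‖xLS‖ + e₂ * ‖mulVecE A xLS‖ / σ := by
  classical
  have hm : 0 < m := by
    rcases Nat.eq_zero_or_pos m with h0 | h
    · exfalso
      apply hb
      subst h0
      exact Subsingleton.elim _ _
    · exact h
  set c : Fin m → ℝ := fun j => mulVecE A xLS j + ε j with hcdef
  have hc : ∀ i, c i = ⟪_root_.row Atil i, xNLS⟫ := by
    intro i
    rw [inner_row, hNLS]
    rfl
  have hx0' : x0 - xNLS ∈ rowSpace Atil := Submodule.sub_mem _ hx0 hxNLS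
  have hpart1 := part1_bound Atil c xNLS hc hrow hm σt hσt hσtA k x0 hx0'
  have hpart2 := part2_bound A E F hE hF Atil hAtil xLS hxLS σ hσ hσA ε xNLS hNLS hxNLS
  have hbne : ‖mulVecE A xLS‖ ≠ 0 := norm_ne_zero_iff.mpr hb
  have hP2 : ‖xNLS - xLS‖ ≤ e₁ * ‖xLS‖ + e₂ * ‖mulVecE A xLS‖ / σ := by
    rw [← he₁] at hpart2
    set s := Real.sqrt (specNorm E ^ 2 + specNorm ((1 + E)⁻¹ * E) ^ 2) with hs
    have key : (‖ε‖ / ‖mulVecE A xLS‖ + (1 + ‖ε‖ / ‖mulVecE A xLS‖) * s) * ‖mulVecE A xLS‖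
        = ‖ε‖ + s * (‖mulVecE A xLS‖ + ‖ε‖) := by
      field_simp
    have he2b : e₂ * ‖mulVecE A xLS‖ / σ
        = (1 + e₁) * ((‖ε‖ + s * (‖mulVecE A xLS‖ + ‖ε‖)) / σ) := by
      rw [he₂]
      rw [show (1 + e₁) * (‖ε‖ / ‖mulVecE A xLS‖ + (1 + ‖ε‖ / ‖mulVecE A xLS‖) * s)
            * ‖mulVecE A xLS‖ / σ
          = (1 + e₁) * (((‖ε‖ / ‖mulVecE A xLS‖ + (1 + ‖ε‖ / ‖mulVecE A xLS‖) * s)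
            * ‖mulVecE A xLS‖) / σ) from by ring, key]
    rw [he2b]
    exact hpart2
  have hfro := frobSq_pos Atil hrow hm
  have hw : ∀ is : Fin k → Fin m, 0 ≤ ∏ j, ‖_root_.row Atil (is j)‖ ^ 2 / frobSq Atil :=
    fun is => Finset.prod_nonneg fun j _ => div_nonneg (sq_nonneg _) hfro.le
  have hW1 := sum_prod_probs_one Atil hrow hm k
  calc ∑ is : Fin k → Fin m,
        (∏ j, ‖_root_.row Atil (is j)‖ ^ 2 / frobSq Atil) * ‖kaczmarzIter Atil c is x0 - xLS‖
      ≤ ∑ is : Fin k → Fin m,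
        (∏ j, ‖_root_.row Atil (is j)‖ ^ 2 / frobSq Atil)
          * (‖kaczmarzIter Atil c is x0 - xNLS‖ + ‖xNLS - xLS‖) := by
        refine Finset.sum_le_sum fun is _ => ?_
        refine mul_le_mul_of_nonneg_left ?_ (hw is)
        exact norm_sub_le_norm_sub_add_norm_sub _ _ _
    _ = (∑ is : Fin k → Fin m,
          (∏ j, ‖_root_.row Atil (is j)‖ ^ 2 / frobSq Atil) * ‖kaczmarzIter Atil c is x0 - xNLS‖)
        + (∑ is : Fin k → Fin m, ∏ j, ‖_root_.row Atil (is j)‖ ^ 2 / frobSq Atil) * ‖xNLS - xLS‖ := by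
        rw [Finset.sum_mul, ← Finset.sum_add_distrib]
        exact Finset.sum_congr rfl fun is _ => by ring
    _ ≤ Real.sqrt ((1 - σt ^ 2 / frobSq Atil) ^ k) * ‖x0 - xNLS‖ + 1 * ‖xNLS - xLS‖ := by
        rw [hW1]
        exact add_le_add hpart1 le_rfl
    _ ≤ Real.sqrt ((1 - σt ^ 2 / frobSq Atil) ^ k) * ‖x0 - xNLS‖
        + e₁ * ‖xLS‖ + e₂ * ‖mulVecE A xLS‖ / σ := by
        rw [one_mul]
        linarith [hP2]
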